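/- Let V ∈ ℝ^{n×d} have full rank d with rows w¹,…,wⁿ ∈ ℝ^d, and let c* ∈ ℝⁿ with c* > 0. Then the map F : ℝ^d → ℝ^d, F(λ) = ∑_{k=1}^n c*_k e^{⟨λ, w^k⟩} w^k, is a bijection (indeed a real analytic diffeomorphism) from ℝ^d onto the interior C° = { ∑_{k=1}^n c'_k w^k : c' ∈ ℝⁿ, c' > 0 } of the cone generated by w¹,…,wⁿ. -/

import Mathlib

open Finset

/-- componentwise sign vector -/
noncomputable def sgn {n : ℕ} (x : Fin n → ℝ) : Fin n → ℝ := fun i => Real.sign (x i)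

/-- set of sign vectors of a set -/
noncomputable def sgnSet {n : ℕ} (A : Set (Fin n → ℝ)) : Set (Fin n → ℝ) := sgn '' A

/-- standard dot product -/
noncomputable def dotp {m : ℕ} (x y : Fin m → ℝ) : ℝ := ∑ i, x i * y i

/-- orthogonal complement of a set, as a set -/
noncomputable def perpSet {n : ℕ} (A : Set (Fin n → ℝ)) : Set (Fin n → ℝ) :=
  {y | ∀ x ∈ A, dotp x y = 0}

open Filter

section Aux

lemma dotp_sub_left {m : ℕ} (x y z : Fin m → ℝ) : dotp (x - y) z = dotp x z - dotp y z := by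
  simp [dotp, sub_mul, Finset.sum_sub_distrib]

lemma dotp_sum_smul {m n : ℕ} (u : Fin m → ℝ) (a : Fin n → ℝ) (w : Fin n → Fin m → ℝ) :
    dotp u (∑ k, a k • w k) = ∑ k, a k * dotp u (w k) := by
  simp only [dotp, Finset.sum_apply, Pi.smul_apply, smul_eq_mul, Finset.mul_sum]
  rw [Finset.sum_comm]
  exact Finset.sum_congr rfl fun k _ => Finset.sum_congr rfl fun i _ => by ring

lemma dotp_add_single {m : ℕ} (u : Fin m → ℝ) (t : ℝ) (i : Fin m) (v : Fin m → ℝ) :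
    dotp (u + t • (Pi.single i 1 : Fin m → ℝ)) v = dotp u v + t * v i := by
  simp [dotp, add_mul, Finset.sum_add_distrib, Pi.single_apply, ite_mul, mul_ite,
    Finset.sum_ite_eq' Finset.univ i]

lemma exp_mono_key {a b : ℝ} : 0 ≤ (Real.exp a - Real.exp b) * (a - b) := by
  rcases lt_trichotomy a b with h | h | h
  · nlinarith [Real.exp_lt_exp.2 h]
  · simp [h]
  · nlinarith [Real.exp_lt_exp.2 h]

lemma exp_mono_strict {a b : ℝ} (h : a ≠ b) : 0 < (Real.exp a - Real.exp b) * (a - b) := by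
  rcases lt_or_gt_of_ne h with h | h
  · nlinarith [Real.exp_lt_exp.2 h]
  · nlinarith [Real.exp_lt_exp.2 h]

lemma tangent_bound {c c' : ℝ} (hcp : 0 < c) (hc'p : 0 < c') (t : ℝ) :
    c' * (1 - Real.log (c' / c)) ≤ c * Real.exp t - c' * t := by
  set s := Real.log (c' / c) with hs
  have h1 : Real.exp s = c' / c := Real.exp_log (div_pos hc'p hcp)
  have h2 : (t - s) + 1 ≤ Real.exp (t - s) := Real.add_one_le_exp _
  have h3 : Real.exp t = Real.exp s * Real.exp (t - s) := by
    rw [← Real.exp_add]; ring_nf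
  rw [h3, h1]
  have : c * (c' / c) = c' := by field_simp
  nlinarith [Real.exp_pos (t - s)]

lemma mulVec_eq_dotp {n d : ℕ} (V : Matrix (Fin n) (Fin d) ℝ) (u : Fin d → ℝ) (k : Fin n) :
    V.mulVec u k = dotp u (V k) := by
  simp [Matrix.mulVec, dotp, dotProduct, mul_comm]

lemma span_full {n d : ℕ} (V : Matrix (Fin n) (Fin d) ℝ) (hV : V.rank = d) :
    Function.Injective V.mulVecLin := by
  have h1 : LinearMap.ker V.mulVecLin = ⊥ := by
    have h2 := LinearMap.finrank_range_add_finrank_ker V.mulVecLin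
    rw [Module.finrank_pi, Fintype.card_fin] at h2
    have : Module.finrank ℝ (LinearMap.range V.mulVecLin) = d := hV
    have hker : Module.finrank ℝ (LinearMap.ker V.mulVecLin) = 0 := by omega
    exact Submodule.finrank_eq_zero.mp hker
  exact LinearMap.ker_eq_bot.mp h1

lemma span_full' {n d : ℕ} (V : Matrix (Fin n) (Fin d) ℝ) (hV : V.rank = d)
    (u : Fin d → ℝ) (hu : ∀ k, dotp u (V k) = 0) : u = 0 := by
  have h : V.mulVecLin u = V.mulVecLin 0 := by
    rw [map_zero]
    funext k
    exact (mulVec_eq_dotp V u k).trans (hu k)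
  exact span_full V hV h

lemma antilip {n d : ℕ} (V : Matrix (Fin n) (Fin d) ℝ) (hV : V.rank = d) :
    ∃ C : ℝ, 0 < C ∧ ∀ u : Fin d → ℝ, ‖u‖ ≤ C * ‖V.mulVec u‖ := by
  have hinj := span_full V hV
  let e : (Fin d → ℝ) ≃ₗ[ℝ] LinearMap.range V.mulVecLin :=
    LinearEquiv.ofInjective V.mulVecLin hinj
  let f : LinearMap.range V.mulVecLin →L[ℝ] (Fin d → ℝ) :=
    LinearMap.toContinuousLinearMap (e.symm : LinearMap.range V.mulVecLin →ₗ[ℝ] (Fin d → ℝ))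
  refine ⟨max ‖f‖ 1, lt_max_of_lt_right one_pos, fun u => ?_⟩
  have h1 : ‖u‖ = ‖f (e u)‖ := by
    congr 1
    exact (e.symm_apply_apply u).symm
  rw [h1]
  calc ‖f (e u)‖ ≤ ‖f‖ * ‖e u‖ := f.le_opNorm _
    _ ≤ max ‖f‖ 1 * ‖e u‖ := by gcongr; exact le_max_left _ _
    _ = max ‖f‖ 1 * ‖V.mulVec u‖ := by congr 1

lemma term_bound {c c' cc CC t : ℝ} (h1 : 0 < cc) (h2 : cc ≤ c) (h3 : cc ≤ c') (h4 : c' ≤ CC) :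
    min (cc * |t|) (cc * Real.exp |t| - CC * |t|) ≤ c * Real.exp t - c' * t := by
  rcases le_or_gt t 0 with h | h
  · rw [abs_of_nonpos h]
    refine (min_le_left _ _).trans ?_
    nlinarith [Real.exp_pos t]
  · rw [abs_of_pos h]
    refine (min_le_right _ _).trans ?_
    nlinarith [Real.exp_pos t]

lemma exists_norm_coord {n : ℕ} (hn : 0 < n) (t : Fin n → ℝ) : ∃ k, ‖t‖ = |t k| := by
  obtain ⟨k, -, hk⟩ := Finset.exists_mem_eq_sup Finset.univ
    ⟨⟨0, hn⟩, Finset.mem_univ _⟩ (fun k => ‖t k‖₊)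
  exact ⟨k, by rw [Pi.norm_def, hk]; simp [Real.norm_eq_abs]⟩

lemma min_tendsto {f g : ℝ → ℝ} (hf : Tendsto f atTop atTop) (hg : Tendsto g atTop atTop) :
    Tendsto (fun s => min (f s) (g s)) atTop atTop := by
  rw [tendsto_atTop]
  intro b
  filter_upwards [hf.eventually_ge_atTop b, hg.eventually_ge_atTop b] with s h1 h2
  exact le_min h1 h2

lemma aux_tendsto (a b : ℝ) (ha : 0 < a) :
    Tendsto (fun s => a * Real.exp s - b * s) atTop atTop := by
  have h1 : Tendsto (fun s : ℝ => Real.exp s / s) atTop atTop := by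
    simpa using Real.tendsto_exp_div_pow_atTop 1
  have h2 : Tendsto (fun s : ℝ => a * (Real.exp s / s) - b) atTop atTop :=
    (h1.const_mul_atTop ha).atTop_add tendsto_const_nhds
  have h3 : Tendsto (fun s : ℝ => s * (a * (Real.exp s / s) - b)) atTop atTop :=
    Tendsto.atTop_mul_atTop₀ tendsto_id h2
  refine h3.congr' ?_
  filter_upwards [eventually_gt_atTop (0:ℝ)] with s hs
  field_simp

lemma inj_part {n d : ℕ} (V : Matrix (Fin n) (Fin d) ℝ) (hV : V.rank = d)
    (cstar : Fin n → ℝ) (hc : ∀ i, 0 < cstar i) :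
    Function.Injective (fun lam : Fin d → ℝ =>
        ∑ k, (cstar k * Real.exp (dotp lam (V k))) • V k) := by
  intro x y hxy
  simp only at hxy
  set u := x - y with hu
  have h1 : dotp u (∑ k, (cstar k * Real.exp (dotp x (V k))) • V k)
      = dotp u (∑ k, (cstar k * Real.exp (dotp y (V k))) • V k) := by rw [hxy]
  rw [dotp_sum_smul u _ V, dotp_sum_smul u _ V] at h1
  have hsub : ∀ k, dotp u (V k) = dotp x (V k) - dotp y (V k) := fun k => dotp_sub_left x y (V k)
  have h2 : ∑ k, cstar k * ((Real.exp (dotp x (V k)) - Real.exp (dotp y (V k)))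
      * (dotp x (V k) - dotp y (V k))) = 0 := by
    have := sub_eq_zero_of_eq h1
    rw [← Finset.sum_sub_distrib] at this
    rw [← this]
    refine Finset.sum_congr rfl fun k _ => ?_
    rw [hsub k]; ring
  have h3 : ∀ k ∈ Finset.univ, (0:ℝ) ≤ cstar k * ((Real.exp (dotp x (V k)) - Real.exp (dotp y (V k)))
      * (dotp x (V k) - dotp y (V k))) := fun k _ => mul_nonneg (hc k).le exp_mono_key
  have h4 := (Finset.sum_eq_zero_iff_of_nonneg h3).mp h2
  have h5 : ∀ k, dotp u (V k) = 0 := by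
    intro k
    by_contra hne
    have hne' : dotp x (V k) ≠ dotp y (V k) := fun h => hne (by rw [hsub k, h, sub_self])
    have := mul_pos (hc k) (exp_mono_strict hne')
    linarith [h4 k (Finset.mem_univ k)]
  have := span_full' V hV u h5
  exact sub_eq_zero.mp this

lemma exists_min {n d : ℕ} (hn : 0 < n) (V : Matrix (Fin n) (Fin d) ℝ) (hV : V.rank = d)
    (cstar c' : Fin n → ℝ) (hc : ∀ i, 0 < cstar i) (hc' : ∀ i, 0 < c' i) :
    ∃ lam0 : Fin d → ℝ, ∀ mu,
      (∑ k, (cstar k * Real.exp (dotp lam0 (V k)) - c' k * dotp lam0 (V k))) ≤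
      (∑ k, (cstar k * Real.exp (dotp mu (V k)) - c' k * dotp mu (V k))) := by
  set G : (Fin d → ℝ) → ℝ := fun lam =>
    ∑ k, (cstar k * Real.exp (dotp lam (V k)) - c' k * dotp lam (V k)) with hG
  have hne : (Finset.univ : Finset (Fin n)).Nonempty := ⟨⟨0, hn⟩, Finset.mem_univ _⟩
  set cc := Finset.univ.inf' hne (fun k => min (cstar k) (c' k)) with hcc
  set CC := Finset.univ.sup' hne c' with hCC
  have ccpos : 0 < cc := by
    rw [hcc, Finset.lt_inf'_iff]
    exact fun k _ => lt_min (hc k) (hc' k)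
  set Bmin : ℝ := ∑ k, min (c' k * (1 - Real.log (c' k / cstar k))) 0 with hB
  set φ : ℝ → ℝ := fun s => min (cc * s) (cc * Real.exp s - CC * s) with hφ
  have key : ∀ lam, Bmin + φ ‖V.mulVec lam‖ ≤ G lam := by
    intro lam
    obtain ⟨k0, hk0⟩ := exists_norm_coord hn (V.mulVec lam)
    have hGsplit : G lam = (cstar k0 * Real.exp (dotp lam (V k0)) - c' k0 * dotp lam (V k0))
        + ∑ k ∈ Finset.univ.erase k0,
            (cstar k * Real.exp (dotp lam (V k)) - c' k * dotp lam (V k)) :=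
      (Finset.add_sum_erase _ _ (Finset.mem_univ k0)).symm
    have h1 : φ ‖V.mulVec lam‖ ≤
        cstar k0 * Real.exp (dotp lam (V k0)) - c' k0 * dotp lam (V k0) := by
      rw [hφ]
      have := term_bound (c := cstar k0) (c' := c' k0) (t := dotp lam (V k0)) ccpos
        ((Finset.inf'_le _ (Finset.mem_univ k0)).trans (min_le_left _ _))
        ((Finset.inf'_le _ (Finset.mem_univ k0)).trans (min_le_right _ _))
        (Finset.le_sup' _ (Finset.mem_univ k0))
      rw [hk0, mulVec_eq_dotp]
      exact this
    have h2 : Bmin ≤ ∑ k ∈ Finset.univ.erase k0,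
        (cstar k * Real.exp (dotp lam (V k)) - c' k * dotp lam (V k)) := by
      have e1 : ∑ k ∈ Finset.univ.erase k0, min (c' k * (1 - Real.log (c' k / cstar k))) 0
          = Bmin - min (c' k0 * (1 - Real.log (c' k0 / cstar k0))) 0 :=
        Finset.sum_erase_eq_sub (Finset.mem_univ k0)
      have e2 : Bmin ≤ ∑ k ∈ Finset.univ.erase k0,
          min (c' k * (1 - Real.log (c' k / cstar k))) 0 := by
        rw [e1]; linarith [min_le_right (c' k0 * (1 - Real.log (c' k0 / cstar k0))) (0:ℝ)]
      refine e2.trans (Finset.sum_le_sum fun k _ =>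
            (min_le_left _ _).trans (tangent_bound (hc k) (hc' k) _))
    rw [hGsplit]
    linarith
  have hdotcont : ∀ v : Fin d → ℝ, Continuous fun lam : Fin d → ℝ => dotp lam v := by
    intro v
    exact continuous_finset_sum _ fun i _ => (continuous_apply i).mul continuous_const
  have hGcont : Continuous G := by
    refine continuous_finset_sum _ fun k _ => Continuous.sub ?_ ?_
    · exact continuous_const.mul (Real.continuous_exp.comp (hdotcont (V k)))
    · exact continuous_const.mul (hdotcont (V k))
  obtain ⟨C, hC, hCb⟩ := antilip V hV
  have hnorm : Tendsto (fun lam : Fin d → ℝ => ‖V.mulVec lam‖) (cocompact _) atTop := by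
    refine tendsto_atTop_mono (fun lam => ?_) (tendsto_norm_cocompact_atTop.atTop_div_const hC)
    exact (div_le_iff₀' hC).mpr (hCb lam)
  have hφt : Tendsto φ atTop atTop :=
    min_tendsto (tendsto_id.const_mul_atTop ccpos) (aux_tendsto cc CC ccpos)
  have hGt : Tendsto G (cocompact _) atTop :=
    tendsto_atTop_mono key (tendsto_atTop_add_const_left _ Bmin (hφt.comp hnorm))
  exact hGcont.exists_forall_le hGt

lemma critical {n d : ℕ} (V : Matrix (Fin n) (Fin d) ℝ) (cstar c' : Fin n → ℝ)
    (lam0 : Fin d → ℝ)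
    (hmin : ∀ mu : Fin d → ℝ,
      (∑ k, (cstar k * Real.exp (dotp lam0 (V k)) - c' k * dotp lam0 (V k))) ≤
      (∑ k, (cstar k * Real.exp (dotp mu (V k)) - c' k * dotp mu (V k)))) (i : Fin d) :
    ∑ k, (cstar k * Real.exp (dotp lam0 (V k))) * V k i = ∑ k, c' k * V k i := by
  set g : ℝ → ℝ := fun t => ∑ k, (cstar k * Real.exp (dotp lam0 (V k) + t * V k i)
      - c' k * (dotp lam0 (V k) + t * V k i)) with hg
  have hgt : ∀ t, g t = ∑ k, (cstar k * Real.exp (dotp (lam0 + t • (Pi.single i 1 : Fin d → ℝ)) (V k))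
      - c' k * dotp (lam0 + t • (Pi.single i 1 : Fin d → ℝ)) (V k)) := by
    intro t
    simp only [hg, dotp_add_single]
  have hloc : IsLocalMin g 0 := by
    apply Filter.Eventually.of_forall
    intro t
    rw [hgt t, hgt 0]
    have h0 : (lam0 + (0:ℝ) • (Pi.single i 1 : Fin d → ℝ)) = lam0 := by simp
    rw [h0]
    exact hmin _
  have hlin : ∀ k : Fin n, HasDerivAt (fun t : ℝ => dotp lam0 (V k) + t * V k i) (V k i) 0 :=
    fun k => (hasDerivAt_mul_const (V k i)).const_add _
  have hder : HasDerivAt g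
      (∑ k, (cstar k * (Real.exp (dotp lam0 (V k) + 0 * V k i) * V k i) - c' k * V k i)) 0 :=
    HasDerivAt.fun_sum fun k _ => (((hlin k).exp).const_mul _).sub ((hlin k).const_mul _)
  have hzero := hloc.hasDerivAt_eq_zero hder
  simp only [zero_mul, add_zero] at hzero
  have : ∑ k, (cstar k * (Real.exp (dotp lam0 (V k)) * V k i) - c' k * V k i) = 0 := hzero
  rw [Finset.sum_sub_distrib] at this
  have h2 : ∑ k, cstar k * (Real.exp (dotp lam0 (V k)) * V k i) = ∑ k, c' k * V k i := by
    linarith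
  rw [← h2]
  exact Finset.sum_congr rfl fun k _ => by ring

lemma analytic_part {n d : ℕ} (V : Matrix (Fin n) (Fin d) ℝ) (cstar : Fin n → ℝ) :
    AnalyticOn ℝ (fun lam : Fin d → ℝ =>
        ∑ k, (cstar k * Real.exp (dotp lam (V k))) • V k) Set.univ := by
  have hdot : ∀ k, AnalyticOnNhd ℝ (fun lam : Fin d → ℝ => dotp lam (V k)) Set.univ := by
    intro k
    refine Finset.analyticOnNhd_fun_sum _ fun i _ => ?_
    exact ((ContinuousLinearMap.proj i : (Fin d → ℝ) →L[ℝ] ℝ).analyticOnNhd _).mul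
      analyticOnNhd_const
  refine AnalyticOnNhd.analyticOn ?_
  refine Finset.analyticOnNhd_fun_sum _ fun k _ => ?_
  exact (analyticOnNhd_const.mul (hdot k).rexp).smul analyticOnNhd_const

end Aux

theorem stmt11 {n d : ℕ} (V : Matrix (Fin n) (Fin d) ℝ) (hV : V.rank = d)
    (cstar : Fin n → ℝ) (hc : ∀ i, 0 < cstar i) :
    Function.Injective (fun lam : Fin d → ℝ =>
        ∑ k, (cstar k * Real.exp (dotp lam (V k))) • V k) ∧
    Set.range (fun lam : Fin d → ℝ =>
        ∑ k, (cstar k * Real.exp (dotp lam (V k))) • V k) =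
      {x : Fin d → ℝ | ∃ c' : Fin n → ℝ, (∀ i, 0 < c' i) ∧ x = ∑ k, c' k • V k} ∧
    AnalyticOn ℝ (fun lam : Fin d → ℝ =>
        ∑ k, (cstar k * Real.exp (dotp lam (V k))) • V k) Set.univ := by
  refine ⟨inj_part V hV cstar hc, ?_, analytic_part V cstar⟩
  ext x
  simp only [Set.mem_range, Set.mem_setOf_eq]
  constructor
  · rintro ⟨lam, rfl⟩
    exact ⟨fun k => cstar k * Real.exp (dotp lam (V k)),
      fun k => mul_pos (hc k) (Real.exp_pos _), rfl⟩
  · rintro ⟨c', hc', rfl⟩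
    rcases Nat.eq_zero_or_pos n with hn | hn
    · have hd : d = 0 := by
        have h1 := V.rank_le_card_height
        rw [hV, Fintype.card_fin, hn] at h1
        omega
      refine ⟨0, ?_⟩
      funext j
      exact absurd j.2 (by omega)
    · obtain ⟨lam0, hmin⟩ := exists_min hn V hV cstar c' hc hc'
      refine ⟨lam0, ?_⟩
      funext i
      have h := critical V cstar c' lam0 hmin i
      simp only [Finset.sum_apply, Pi.smul_apply, smul_eq_mul]
      exact h
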